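/- For every ρ ∈ (0,∞) one has χ(ρ) > 0; that is, the infimum over probability mass functions μ on ℤ of S(μ) + ρ I(μ) is strictly positive whenever ρ > 0. -/

import Mathlib

open scoped ENNReal


/-- `S(μ) = ∑_{x∈ℤ} (√μ(x+1) − √μ(x))²`. -/
noncomputable def Sfun (μ : ℤ → ℝ) : ℝ :=
  ∑' x : ℤ, (Real.sqrt (μ (x + 1)) - Real.sqrt (μ x)) ^ 2

/-- `I(μ) = −∑_{x∈ℤ} μ(x) log μ(x) ∈ [0,∞]` (with `0 log 0 = 0`). -/
noncomputable def Ifun (μ : ℤ → ℝ) : ℝ≥0∞ :=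
  ∑' x : ℤ, ENNReal.ofReal (-(μ x * Real.log (μ x)))

/-- `μ` is a probability mass function on `ℤ`. -/
def IsPMF (μ : ℤ → ℝ) : Prop := (∀ x, 0 ≤ μ x) ∧ HasSum μ 1

/-- `χ(ρ) = (1/2) inf_μ [S(μ) + ρ I(μ)]`, the infimum over probability mass functions on `ℤ`. -/
noncomputable def chi (ρ : ℝ≥0∞) : ℝ≥0∞ :=
  (1 / 2) * ⨅ (μ : ℤ → ℝ) (_ : IsPMF μ), (ENNReal.ofReal (Sfun μ) + ρ * Ifun μ)

lemma sqrt3_gt_one : (1:ℝ) < Real.sqrt 3 := by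
  rw [show (1:ℝ) = Real.sqrt 1 by simp]
  exact Real.sqrt_lt_sqrt (by norm_num) (by norm_num)

lemma key_bound (ρ : ℝ≥0∞) (μ : ℤ → ℝ) (h : IsPMF μ) :
    min (ENNReal.ofReal ((Real.sqrt 3 / 2 - 1/2)^2)) (ρ * ENNReal.ofReal (Real.log (4/3)))
      ≤ ENNReal.ofReal (Sfun μ) + ρ * Ifun μ := by
  obtain ⟨hnn, hsum⟩ := h
  by_cases hbig : ∃ x₀ : ℤ, 3/4 < μ x₀
  · obtain ⟨x₀, hx₀⟩ := hbig
    -- μ (x₀+1) ≤ 1/4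
    have hpair : μ x₀ + μ (x₀ + 1) ≤ 1 := by
      have := Summable.sum_le_tsum ({x₀, x₀ + 1} : Finset ℤ) (fun i _ => hnn i) hsum.summable
      rw [hsum.tsum_eq, Finset.sum_pair (by omega)] at this
      exact this
    have hnext : μ (x₀ + 1) ≤ 1/4 := by linarith
    -- summability of the S series
    have hS1 : Summable (fun x : ℤ => μ (x + 1)) := by
      have := hsum.summable.comp_injective (add_left_injective (1 : ℤ))
      exact this
    have hSsum : Summable (fun x : ℤ => (Real.sqrt (μ (x + 1)) - Real.sqrt (μ x)) ^ 2) := by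
      apply Summable.of_nonneg_of_le (fun x => sq_nonneg _)
        (fun x => ?_) (hS1.add hsum.summable)
      have h1 := Real.sq_sqrt (hnn (x + 1))
      have h2 := Real.sq_sqrt (hnn x)
      have h3 := Real.sqrt_nonneg (μ (x + 1))
      have h4 := Real.sqrt_nonneg (μ x)
      nlinarith [mul_nonneg h3 h4]
    have hterm : (Real.sqrt 3 / 2 - 1/2)^2 ≤
        (Real.sqrt (μ (x₀ + 1)) - Real.sqrt (μ x₀)) ^ 2 := by
      set a := Real.sqrt (μ (x₀ + 1)) with ha
      set b := Real.sqrt (μ x₀) with hb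
      have ha2 : a ^ 2 = μ (x₀ + 1) := Real.sq_sqrt (hnn _)
      have hb2 : b ^ 2 = μ x₀ := Real.sq_sqrt (hnn _)
      have ha0 : 0 ≤ a := Real.sqrt_nonneg _
      have hb0 : 0 ≤ b := Real.sqrt_nonneg _
      have hs : Real.sqrt 3 ^ 2 = 3 := Real.sq_sqrt (by norm_num)
      have hs0 : (1:ℝ) < Real.sqrt 3 := sqrt3_gt_one
      have hale : a ≤ 1/2 := by nlinarith
      have hble : Real.sqrt 3 / 2 ≤ b := by nlinarith
      nlinarith
    have hSle : (Real.sqrt 3 / 2 - 1/2)^2 ≤ Sfun μ :=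
      le_trans hterm (Summable.le_tsum hSsum x₀ (fun j _ => sq_nonneg _))
    calc min _ _ ≤ ENNReal.ofReal ((Real.sqrt 3 / 2 - 1/2)^2) := min_le_left _ _
      _ ≤ ENNReal.ofReal (Sfun μ) := ENNReal.ofReal_le_ofReal hSle
      _ ≤ _ := le_self_add
  · push_neg at hbig
    -- entropy bound
    have hI : ρ * ENNReal.ofReal (Real.log (4/3)) ≤ ρ * Ifun μ := by
      apply mul_le_mul_right
      have hIle : (∑' x : ℤ, ENNReal.ofReal (μ x * Real.log (4/3))) ≤ Ifun μ := by
        apply ENNReal.tsum_le_tsum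
        intro x
        apply ENNReal.ofReal_le_ofReal
        rcases eq_or_lt_of_le (hnn x) with h0 | h0
        · simp [← h0]
        · have hlog : Real.log (μ x) ≤ Real.log (3/4) :=
            Real.log_le_log (by linarith [hbig x]) (hbig x)
          have : Real.log (3/4) = - Real.log (4/3) := by
            rw [← Real.log_inv]; norm_num
          nlinarith [Real.log_pos (show (1:ℝ) < 4/3 by norm_num)]
      refine le_trans (le_of_eq ?_) hIle
      rw [← ENNReal.ofReal_tsum_of_nonneg
        (fun x => mul_nonneg (hnn x) (Real.log_nonneg (by norm_num)))
        (hsum.summable.mul_right _)]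
      rw [tsum_mul_right, hsum.tsum_eq, one_mul]
    calc min _ _ ≤ ρ * ENNReal.ofReal (Real.log (4/3)) := min_le_right _ _
      _ ≤ ρ * Ifun μ := hI
      _ ≤ _ := le_add_self

/-- For every ρ ∈ (0,∞) one has χ(ρ) > 0. -/
theorem chi_pos (ρ : ℝ≥0∞) (hρ₀ : 0 < ρ) (hρ : ρ ≠ ⊤) : 0 < chi ρ := by
  have hcpos : 0 < min (ENNReal.ofReal ((Real.sqrt 3 / 2 - 1/2)^2))
      (ρ * ENNReal.ofReal (Real.log (4/3))) := by
    apply lt_min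
    · apply ENNReal.ofReal_pos.2
      have := sqrt3_gt_one
      nlinarith
    · exact ENNReal.mul_pos hρ₀.ne'
        (ENNReal.ofReal_pos.2 (Real.log_pos (by norm_num))).ne'
  have hle : min (ENNReal.ofReal ((Real.sqrt 3 / 2 - 1/2)^2))
      (ρ * ENNReal.ofReal (Real.log (4/3)))
      ≤ ⨅ (μ : ℤ → ℝ) (_ : IsPMF μ), (ENNReal.ofReal (Sfun μ) + ρ * Ifun μ) :=
    le_iInf fun μ => le_iInf fun h => key_bound ρ μ h
  have : 0 < (1/2 : ℝ≥0∞) * min (ENNReal.ofReal ((Real.sqrt 3 / 2 - 1/2)^2))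
      (ρ * ENNReal.ofReal (Real.log (4/3))) :=
    ENNReal.mul_pos (by norm_num) hcpos.ne'
  exact lt_of_lt_of_le this (mul_le_mul_right hle _)
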